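/- Let σ : [0,T] × ℝⁿ → ℝ^{n×d} be Lipschitz in x uniformly in t with constant L, and let Q₁, Q₂ ∈ 𝕊ⁿ satisfy the Loewner inequality [[Q₁, 0],[0, −Q₂]] ≤ 2n[[I, −I],[−I, I]]. Then for any t ∈ [0,T] and x, y ∈ ℝⁿ, (1/2)Tr(σ(t,x)σ(t,x)ᵀ Q₁) − (1/2)Tr(σ(t,y)σ(t,y)ᵀ Q₂) ≤ n·L²·|x − y|². In particular, if x_n, y_n are sequences with n|x_n − y_n|² → 0 and Q₁ⁿ, Q₂ⁿ satisfy the above inequality (with the same n), then limsup_n [(1/2)Tr(σσᵀ(t_n,x_n) Q₁ⁿ) − (1/2)Tr(σσᵀ(t_n,y_n) Q₂ⁿ)] ≤ 0. -/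

import Mathlib

open Matrix Filter Topology

lemma trace_col {n d : ℕ} (A : Matrix (Fin n) (Fin d) ℝ) (Q : Matrix (Fin n) (Fin n) ℝ) :
    (A * Aᵀ * Q).trace = ∑ j : Fin d, (fun i => A i j) ⬝ᵥ (Q *ᵥ (fun i => A i j)) := by
  rw [← Matrix.trace_mul_cycle Aᵀ Q A]
  simp only [Matrix.trace, Matrix.diag, Matrix.mul_apply, Matrix.transpose_apply, dotProduct,
    Matrix.mulVec, Finset.sum_mul, Finset.mul_sum]
  refine Finset.sum_congr rfl fun j _ => ?_
  rw [Finset.sum_comm]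
  exact Finset.sum_congr rfl fun _ _ => Finset.sum_congr rfl fun _ _ => by ring

lemma key {n d : ℕ} (c : ℝ) (hc : 0 ≤ c) (Q₁ Q₂ : Matrix (Fin n) (Fin n) ℝ)
    (hpsd : ((2 * c) • Matrix.fromBlocks (1 : Matrix (Fin n) (Fin n) ℝ) (-1) (-1) 1
        - Matrix.fromBlocks Q₁ 0 0 (-Q₂)).PosSemidef)
    (A B : Matrix (Fin n) (Fin d) ℝ) :
    (1/2) * (A * Aᵀ * Q₁).trace - (1/2) * (B * Bᵀ * Q₂).trace
      ≤ c * ∑ i, ∑ j, ((A - B) i j)^2 := by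
  have hj : ∀ j : Fin d,
      (fun i => A i j) ⬝ᵥ (Q₁ *ᵥ (fun i => A i j)) - (fun i => B i j) ⬝ᵥ (Q₂ *ᵥ (fun i => B i j))
        ≤ 2 * c * ∑ i, ((A - B) i j)^2 := by
    intro j
    have h := hpsd.dotProduct_mulVec_nonneg (Sum.elim (fun i => A i j) (fun i => B i j))
    simp only [star_trivial, Matrix.sub_mulVec, Matrix.smul_mulVec,
      Matrix.fromBlocks_mulVec, Matrix.one_mulVec, Matrix.neg_mulVec, Matrix.zero_mulVec,
      sumElim_dotProduct_sumElim, dotProduct_sub, dotProduct_smul, dotProduct_add,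
      dotProduct_neg, dotProduct_zero, add_zero, zero_add, smul_eq_mul,
      Sum.elim_comp_inl, Sum.elim_comp_inr] at h
    have hsq : ∑ i, ((A - B) i j)^2
        = (fun i => A i j) ⬝ᵥ (fun i => A i j) - (fun i => A i j) ⬝ᵥ (fun i => B i j)
          - (fun i => B i j) ⬝ᵥ (fun i => A i j) + (fun i => B i j) ⬝ᵥ (fun i => B i j) := by
      simp only [dotProduct, Matrix.sub_apply, ← Finset.sum_sub_distrib,
        ← Finset.sum_add_distrib]
      exact Finset.sum_congr rfl fun _ _ => by ring
    rw [hsq]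
    nlinarith [h]
  calc (1/2) * (A * Aᵀ * Q₁).trace - (1/2) * (B * Bᵀ * Q₂).trace
      = (1/2) * ((A * Aᵀ * Q₁).trace - (B * Bᵀ * Q₂).trace) := by ring
    _ ≤ (1/2) * (2 * c * ∑ j, ∑ i, ((A - B) i j)^2) := by
        apply mul_le_mul_of_nonneg_left _ (by norm_num)
        rw [trace_col, trace_col, ← Finset.sum_sub_distrib, Finset.mul_sum]
        exact Finset.sum_le_sum fun j _ => hj j
    _ = c * ∑ i, ∑ j, ((A - B) i j)^2 := by rw [Finset.sum_comm]; ring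

lemma limsup_nonpos_of_forall_pos {f : ℕ → ℝ} (h : ∀ ε > (0:ℝ), ∀ᶠ m in atTop, f m ≤ ε) :
    Filter.limsup f atTop ≤ 0 := by
  rw [Filter.limsup_eq]
  by_cases hb : BddBelow {a | ∀ᶠ m in atTop, f m ≤ a}
  · refine le_of_forall_pos_le_add fun ε hε => ?_
    simpa using csInf_le hb (h ε hε)
  · rw [Real.sInf_of_not_bddBelow hb]

lemma sum_sq_le {n d : ℕ} (L r : ℝ) (A : Matrix (Fin n) (Fin d) ℝ) (hr : 0 ≤ r)
    (h : Real.sqrt (∑ i, ∑ j, (A i j) ^ 2) ≤ L * r) :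
    ∑ i, ∑ j, (A i j) ^ 2 ≤ L ^ 2 * r ^ 2 := by
  have hS : (0:ℝ) ≤ ∑ i, ∑ j, (A i j) ^ 2 :=
    Finset.sum_nonneg fun _ _ => Finset.sum_nonneg fun _ _ => sq_nonneg _
  have h2 := pow_le_pow_left₀ (Real.sqrt_nonneg _) h 2
  rw [Real.sq_sqrt hS] at h2
  calc ∑ i, ∑ j, (A i j) ^ 2 ≤ (L * r) ^ 2 := h2
    _ = L ^ 2 * r ^ 2 := by ring

/-- Second-order term estimate in the comparison proof: if `σ` is `L`-Lipschitz in space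
(Frobenius norm) and `[[Q₁,0],[0,−Q₂]] ≤ 2n[[I,−I],[−I,I]]` in the Loewner order, then
`½Tr(σσᵀ(t,x)Q₁) − ½Tr(σσᵀ(t,y)Q₂) ≤ nL²|x−y|²`; consequently along sequences with
`m‖x_m − y_m‖² → 0` the corresponding limsup is `≤ 0`. -/
theorem stmt17 {n d : ℕ} (T L : ℝ) (hT : 0 < T) (hL : 0 ≤ L)
    (σ : ℝ → EuclideanSpace ℝ (Fin n) → Matrix (Fin n) (Fin d) ℝ)
    (hσlip : ∀ t ∈ Set.Icc (0 : ℝ) T, ∀ x y : EuclideanSpace ℝ (Fin n),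
      Real.sqrt (∑ i, ∑ j, ((σ t x - σ t y) i j) ^ 2) ≤ L * ‖x - y‖) :
    (∀ (Q₁ Q₂ : Matrix (Fin n) (Fin n) ℝ), Q₁.IsSymm → Q₂.IsSymm →
      ((2 * (n : ℝ)) • Matrix.fromBlocks (1 : Matrix (Fin n) (Fin n) ℝ) (-1) (-1) 1
        - Matrix.fromBlocks Q₁ 0 0 (-Q₂)).PosSemidef →
      ∀ t ∈ Set.Icc (0 : ℝ) T, ∀ x y : EuclideanSpace ℝ (Fin n),
        (1 / 2) * ((σ t x) * (σ t x)ᵀ * Q₁).trace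
            - (1 / 2) * ((σ t y) * (σ t y)ᵀ * Q₂).trace
          ≤ (n : ℝ) * L ^ 2 * ‖x - y‖ ^ 2) ∧
      ∀ (tseq : ℕ → ℝ) (xseq yseq : ℕ → EuclideanSpace ℝ (Fin n))
        (Q₁seq Q₂seq : ℕ → Matrix (Fin n) (Fin n) ℝ),
        (∀ m, tseq m ∈ Set.Icc (0 : ℝ) T) →
        (∀ m, (Q₁seq m).IsSymm) → (∀ m, (Q₂seq m).IsSymm) →
        (∀ m : ℕ, ((2 * (m : ℝ)) • Matrix.fromBlocks (1 : Matrix (Fin n) (Fin n) ℝ)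
            (-1) (-1) 1 - Matrix.fromBlocks (Q₁seq m) 0 0 (-(Q₂seq m))).PosSemidef) →
        Tendsto (fun m : ℕ => (m : ℝ) * ‖xseq m - yseq m‖ ^ 2) atTop (𝓝 0) →
        Filter.limsup (fun m : ℕ =>
            (1 / 2) * ((σ (tseq m) (xseq m)) * (σ (tseq m) (xseq m))ᵀ * Q₁seq m).trace
              - (1 / 2) * ((σ (tseq m) (yseq m)) * (σ (tseq m) (yseq m))ᵀ * Q₂seq m).trace)
          atTop ≤ 0 := by
  have main : ∀ (c : ℝ), 0 ≤ c → ∀ (Q₁ Q₂ : Matrix (Fin n) (Fin n) ℝ),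
      ((2 * c) • Matrix.fromBlocks (1 : Matrix (Fin n) (Fin n) ℝ) (-1) (-1) 1
        - Matrix.fromBlocks Q₁ 0 0 (-Q₂)).PosSemidef →
      ∀ t ∈ Set.Icc (0 : ℝ) T, ∀ x y : EuclideanSpace ℝ (Fin n),
        (1 / 2) * ((σ t x) * (σ t x)ᵀ * Q₁).trace
            - (1 / 2) * ((σ t y) * (σ t y)ᵀ * Q₂).trace
          ≤ c * L ^ 2 * ‖x - y‖ ^ 2 := by
    intro c hc Q₁ Q₂ hpsd t ht x y
    calc (1 / 2) * ((σ t x) * (σ t x)ᵀ * Q₁).trace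
            - (1 / 2) * ((σ t y) * (σ t y)ᵀ * Q₂).trace
        ≤ c * ∑ i, ∑ j, ((σ t x - σ t y) i j) ^ 2 := key c hc Q₁ Q₂ hpsd _ _
      _ ≤ c * (L ^ 2 * ‖x - y‖ ^ 2) :=
          mul_le_mul_of_nonneg_left
            (sum_sq_le L ‖x - y‖ _ (norm_nonneg _) (hσlip t ht x y)) hc
      _ = c * L ^ 2 * ‖x - y‖ ^ 2 := by ring
  constructor
  · intro Q₁ Q₂ _ _ hpsd t ht x y
    exact main (n : ℝ) (Nat.cast_nonneg n) Q₁ Q₂ hpsd t ht x y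
  · intro tseq xseq yseq Q₁seq Q₂seq htm _ _ hpsd htend
    apply limsup_nonpos_of_forall_pos
    intro ε hε
    have hbd : ∀ m : ℕ,
        (1 / 2) * ((σ (tseq m) (xseq m)) * (σ (tseq m) (xseq m))ᵀ * Q₁seq m).trace
          - (1 / 2) * ((σ (tseq m) (yseq m)) * (σ (tseq m) (yseq m))ᵀ * Q₂seq m).trace
        ≤ L ^ 2 * ((m : ℝ) * ‖xseq m - yseq m‖ ^ 2) := by
      intro m
      have := main (m : ℝ) (Nat.cast_nonneg m) (Q₁seq m) (Q₂seq m) (hpsd m)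
        (tseq m) (htm m) (xseq m) (yseq m)
      linarith [this]
    have htend2 : Tendsto (fun m : ℕ => L ^ 2 * ((m : ℝ) * ‖xseq m - yseq m‖ ^ 2))
        atTop (𝓝 0) := by
      simpa using htend.const_mul (L ^ 2)
    filter_upwards [htend2.eventually_lt_const hε] with m hm
    exact le_trans (hbd m) hm.le
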